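/- For all integers n ≥ m ≥ 3, the Ramsey number of the double star satisfies r(S(n,m)) ≥ max(2n + 2, n + 2m + 2). -/

import Mathlib

open SimpleGraph Set

/-- `G` contains a copy of the double star `S(n,m)`. -/
def HasDoubleStar {V : Type*} (G : SimpleGraph V) (n m : ℕ) : Prop :=
  ∃ (u v : V) (A B : Finset V), G.Adj u v ∧
    ↑A ⊆ G.neighborSet u ∧ ↑B ⊆ G.neighborSet v ∧
    v ∉ A ∧ u ∉ B ∧ Disjoint A B ∧ A.card = n ∧ B.card = m

/-- Ramsey number of the double star `S(n,m)`. -/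
noncomputable def doubleStarRamsey (n m : ℕ) : ℕ :=
  sInf {N : ℕ | ∀ G : SimpleGraph (Fin N), HasDoubleStar G n m ∨ HasDoubleStar Gᶜ n m}

/-- `G` is a `(δ,η)`-graph. -/
def IsDEGraph {V : Type*} [Fintype V] (δ η : ℝ) (G : SimpleGraph V) : Prop :=
  1 < Fintype.card V ∧
  (∀ v : V, ((G.neighborSet v).ncard : ℝ) + 1 ≥ δ * Fintype.card V) ∧
  (∀ u v : V, G.Adj u v →
    ((G.neighborSet u ∪ G.neighborSet v).ncard : ℝ) ≤ (1 - η) * Fintype.card V)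

/-! ### Auxiliary machinery -/

section Aux

private lemma card_filter_val {M : ℕ} (P : ℕ → Prop) [DecidablePred P] :
    (Finset.univ.filter (fun j : Fin M => P j.val)).card = ((Finset.range M).filter P).card := by
  apply Finset.card_bij (fun j _ => j.val)
  · intro a ha
    simp only [Finset.mem_filter, Finset.mem_univ, true_and] at ha
    simp only [Finset.mem_filter, Finset.mem_range]
    exact ⟨a.isLt, ha⟩
  · intro a _ b _ h; exact Fin.val_injective h
  · intro b hb
    simp only [Finset.mem_filter, Finset.mem_range] at hb
    exact ⟨⟨b, hb.1⟩, by simp [hb.2], rfl⟩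

private lemma card_le_of_nbhd_sub {M : ℕ} {G : SimpleGraph (Fin M)} {u : Fin M} {T : Finset ℕ}
    (hT : ∀ j, G.Adj u j → j.val ∈ T) {s : Finset (Fin M)} (hs : ↑s ⊆ G.neighborSet u) :
    s.card ≤ T.card := by
  apply Finset.card_le_card_of_injOn Fin.val
  · intro a ha
    exact hT a (hs (Finset.mem_coe.mpr ha))
  · intro a _ b _ h; exact Fin.val_injective h

private lemma noDS_of_bound {M n m : ℕ} {G : SimpleGraph (Fin M)}
    (h : ∀ u : Fin M, ∃ T : Finset ℕ, T.card ≤ n ∧ ∀ j, G.Adj u j → j.val ∈ T) :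
    ¬ HasDoubleStar G n m := by
  rintro ⟨u, v, A, B, hadj, hA, hB, hvA, _, _, hcA, _⟩
  obtain ⟨T, hTc, hT⟩ := h u
  have hsub : ↑(insert v A) ⊆ G.neighborSet u := by
    intro a ha
    simp only [Finset.coe_insert, Set.mem_insert_iff] at ha
    rcases ha with rfl | ha
    · exact hadj
    · exact hA ha
  have := card_le_of_nbhd_sub hT hsub
  rw [Finset.card_insert_of_notMem hvA, hcA] at this
  omega

/-- Pull back a graph along `Fin.castLE`. -/
private def pullG {N M : ℕ} (h : N ≤ M) (G : SimpleGraph (Fin M)) : SimpleGraph (Fin N) where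
  Adj i j := G.Adj (Fin.castLE h i) (Fin.castLE h j)
  symm := ⟨fun _ _ hij => hij.symm⟩
  loopless := ⟨fun i hij => G.loopless.irrefl _ hij⟩

private lemma pullG_compl {N M : ℕ} (h : N ≤ M) (G : SimpleGraph (Fin M)) :
    (pullG h G)ᶜ = pullG h Gᶜ := by
  ext i j
  simp only [compl_adj, pullG, ne_eq]
  constructor
  · rintro ⟨hne, hna⟩
    exact ⟨fun hc => hne ((Fin.castLE_injective h) hc), hna⟩
  · rintro ⟨hne, hna⟩
    exact ⟨fun hc => hne (by rw [hc]), hna⟩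

private lemma pullG_hds {N M n m : ℕ} (h : N ≤ M) (G : SimpleGraph (Fin M))
    (hd : HasDoubleStar (pullG h G) n m) : HasDoubleStar G n m := by
  classical
  obtain ⟨u, v, A, B, hadj, hA, hB, hvA, huB, hAB, hcA, hcB⟩ := hd
  have hinj : Function.Injective (Fin.castLE h) := Fin.castLE_injective h
  refine ⟨Fin.castLE h u, Fin.castLE h v, A.image (Fin.castLE h), B.image (Fin.castLE h),
    hadj, ?_, ?_, ?_, ?_, ?_, ?_, ?_⟩
  · intro a ha
    simp only [Finset.coe_image, Set.mem_image, Finset.mem_coe] at ha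
    obtain ⟨a₀, ha₀, rfl⟩ := ha
    exact hA ha₀
  · intro b hb
    simp only [Finset.coe_image, Set.mem_image, Finset.mem_coe] at hb
    obtain ⟨b₀, hb₀, rfl⟩ := hb
    exact hB hb₀
  · simp only [Finset.mem_image, not_exists]
    rintro a ⟨ha, hae⟩
    exact hvA (hinj hae ▸ ha)
  · simp only [Finset.mem_image, not_exists]
    rintro b ⟨hb, hbe⟩
    exact huB (hinj hbe ▸ hb)
  · exact (Finset.disjoint_image hinj).mpr hAB
  · rw [Finset.card_image_of_injective _ hinj, hcA]
  · rw [Finset.card_image_of_injective _ hinj, hcB]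

private lemma ge_of_counterexample {n m M N : ℕ}
    (H : SimpleGraph (Fin M)) (h1 : ¬ HasDoubleStar H n m) (h2 : ¬ HasDoubleStar Hᶜ n m)
    (hN : ∀ G : SimpleGraph (Fin N), HasDoubleStar G n m ∨ HasDoubleStar Gᶜ n m) :
    M + 1 ≤ N := by
  by_contra hc
  have hle : N ≤ M := by omega
  rcases hN (pullG hle H) with hd | hd
  · exact h1 (pullG_hds hle H hd)
  · rw [pullG_compl] at hd
    exact h2 (pullG_hds hle Hᶜ hd)

/-! ### Existence (upper bound): the defining set is nonempty -/

private lemma bigR {N n m : ℕ} (G : SimpleGraph (Fin N)) [DecidableRel G.Adj]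
    (R : Finset (Fin N)) (hdeg : ∀ v ∈ R, n + m + 1 ≤ G.degree v)
    (hcard : n + m + 2 ≤ R.card) :
    HasDoubleStar G n m ∨ HasDoubleStar Gᶜ n m := by
  classical
  by_cases hE : ∃ u ∈ R, ∃ v ∈ R, G.Adj u v
  · obtain ⟨u, hu, v, hv, huv⟩ := hE
    left
    have hudeg := hdeg u hu
    have hvdeg := hdeg v hv
    have hvB : m ≤ ((G.neighborFinset v).erase u).card := by
      rw [Finset.card_erase_of_mem (by rw [mem_neighborFinset]; exact huv.symm)]
      have : G.degree v = (G.neighborFinset v).card := rfl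
      omega
    obtain ⟨B, hBsub, hBcard⟩ := Finset.exists_subset_card_eq hvB
    have hAn : n ≤ ((G.neighborFinset u) \ (insert v B)).card := by
      have h1 : ((G.neighborFinset u) \ (insert v B)).card ≥
          (G.neighborFinset u).card - (insert v B).card := Finset.le_card_sdiff _ _
      have h2 : (insert v B).card ≤ m + 1 := by
        apply (Finset.card_insert_le _ _).trans
        omega
      have : G.degree u = (G.neighborFinset u).card := rfl
      omega
    obtain ⟨A, hAsub, hAcard⟩ := Finset.exists_subset_card_eq hAn
    refine ⟨u, v, A, B, huv, ?_, ?_, ?_, ?_, ?_, hAcard, hBcard⟩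
    · intro a ha
      have := hAsub (Finset.mem_coe.mp ha)
      rw [Finset.mem_sdiff, mem_neighborFinset] at this
      exact this.1
    · intro b hb
      have := hBsub (Finset.mem_coe.mp hb)
      rw [Finset.mem_erase, mem_neighborFinset] at this
      exact this.2
    · intro hvmem
      have := hAsub hvmem
      rw [Finset.mem_sdiff] at this
      exact this.2 (Finset.mem_insert_self _ _)
    · intro humem
      have := hBsub humem
      rw [Finset.mem_erase] at this
      exact this.1 rfl
    · rw [Finset.disjoint_left]
      intro a haA haB
      have := hAsub haA
      rw [Finset.mem_sdiff] at this
      exact this.2 (Finset.mem_insert_of_mem haB)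
  · -- R is independent: get the double star in the complement
    right
    push_neg at hE
    have h2 : 1 < R.card := by omega
    obtain ⟨u, hu, v, hv, huv⟩ := Finset.one_lt_card.mp h2
    have hBn : m ≤ ((R.erase u).erase v).card := by
      rw [Finset.card_erase_of_mem (Finset.mem_erase.mpr ⟨Ne.symm huv, hv⟩),
        Finset.card_erase_of_mem hu]
      omega
    obtain ⟨B, hBsub, hBcard⟩ := Finset.exists_subset_card_eq hBn
    have hAn : n ≤ (((R.erase u).erase v) \ B).card := by
      have h1 := Finset.le_card_sdiff B ((R.erase u).erase v)
      have h2' : ((R.erase u).erase v).card = R.card - 1 - 1 := by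
        rw [Finset.card_erase_of_mem (Finset.mem_erase.mpr ⟨Ne.symm huv, hv⟩),
          Finset.card_erase_of_mem hu]
      omega
    obtain ⟨A, hAsub, hAcard⟩ := Finset.exists_subset_card_eq hAn
    have hmemA : ∀ a ∈ A, a ∈ R ∧ a ≠ u ∧ a ≠ v := by
      intro a ha
      have := hAsub ha
      rw [Finset.mem_sdiff, Finset.mem_erase, Finset.mem_erase] at this
      exact ⟨this.1.2.2, this.1.2.1, this.1.1⟩
    have hmemB : ∀ b ∈ B, b ∈ R ∧ b ≠ u ∧ b ≠ v := by
      intro b hb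
      have := hBsub hb
      rw [Finset.mem_erase, Finset.mem_erase] at this
      exact ⟨this.2.2, this.2.1, this.1⟩
    refine ⟨u, v, A, B, ?_, ?_, ?_, ?_, ?_, ?_, hAcard, hBcard⟩
    · exact ⟨huv, hE u hu v hv⟩
    · intro a ha
      obtain ⟨haR, hau, _⟩ := hmemA a (Finset.mem_coe.mp ha)
      exact ⟨Ne.symm hau, hE u hu a haR⟩
    · intro b hb
      obtain ⟨hbR, _, hbv⟩ := hmemB b (Finset.mem_coe.mp hb)
      exact ⟨Ne.symm hbv, hE v hv b hbR⟩
    · intro hvmem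
      exact (hmemA v hvmem).2.2 rfl
    · intro humem
      exact (hmemB u humem).2.1 rfl
    · rw [Finset.disjoint_left]
      intro a haA haB
      have := hAsub haA
      rw [Finset.mem_sdiff] at this
      exact this.2 haB

private lemma ramsey_exists (n m : ℕ) :
    ∀ G : SimpleGraph (Fin (4 * n + 4 * m + 8)), HasDoubleStar G n m ∨ HasDoubleStar Gᶜ n m := by
  intro G
  classical
  have hcardV : Fintype.card (Fin (4 * n + 4 * m + 8)) = 4 * n + 4 * m + 8 := by simp
  set R : Finset (Fin (4 * n + 4 * m + 8)) :=
    Finset.univ.filter (fun v => n + m + 1 ≤ G.degree v) with hR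
  set Rc : Finset (Fin (4 * n + 4 * m + 8)) :=
    Finset.univ.filter (fun v => G.degree v ≤ n + m) with hRc
  have hcover : (Finset.univ : Finset (Fin (4 * n + 4 * m + 8))) ⊆ R ∪ Rc := by
    intro v _
    rw [Finset.mem_union, hR, hRc, Finset.mem_filter, Finset.mem_filter]
    simp only [Finset.mem_univ, true_and]
    omega
  have hsum : 4 * n + 4 * m + 8 ≤ R.card + Rc.card := by
    calc 4 * n + 4 * m + 8 = (Finset.univ : Finset (Fin (4 * n + 4 * m + 8))).card := by
          rw [Finset.card_univ, hcardV]
      _ ≤ (R ∪ Rc).card := Finset.card_le_card hcover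
      _ ≤ R.card + Rc.card := Finset.card_union_le _ _
  by_cases hbig : 2 * (n + m + 2) ≤ R.card
  · exact bigR G R (fun v hv => (Finset.mem_filter.mp hv).2) (by omega)
  · have hdegc : ∀ v ∈ Rc, n + m + 1 ≤ Gᶜ.degree v := by
      intro v hv
      have hdv : G.degree v ≤ n + m := (Finset.mem_filter.mp hv).2
      have hcd := G.degree_compl v
      rw [hcardV] at hcd
      omega
    rcases bigR Gᶜ Rc hdegc (by omega) with h | h
    · right; exact h
    · left; rwa [compl_compl] at h

end Aux

/-! ### Construction 1: complete bipartite, `M = n + 2m + 1` -/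

section Bip

private def bipG (c M : ℕ) : SimpleGraph (Fin M) where
  Adj i j := (i.val < c) ≠ (j.val < c)
  symm := ⟨fun _ _ h => Ne.symm h⟩
  loopless := ⟨fun _ h => h rfl⟩

private lemma bipG_adj {c M : ℕ} {i j : Fin M} :
    (bipG c M).Adj i j ↔ (i.val < c) ≠ (j.val < c) := Iff.rfl

private lemma bipG_no (n m : ℕ) (hm : m ≤ n) (hm1 : 1 ≤ m) :
    ¬ HasDoubleStar (bipG (n + m + 1) (n + 2 * m + 1)) n m ∧
    ¬ HasDoubleStar (bipG (n + m + 1) (n + 2 * m + 1))ᶜ n m := by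
  set c := n + m + 1 with hc
  set M := n + 2 * m + 1 with hM
  constructor
  · rintro ⟨u, v, A, B, hadj, hA, hB, hvA, huB, hAB, hcA, hcB⟩
    by_cases hu : u.val < c
    · -- neighbors of u are on the right side, which has m elements
      have hT : ∀ j, (bipG c M).Adj u j → j.val ∈ Finset.Icc c (M - 1) := by
        intro j hj
        rw [bipG_adj] at hj
        simp only [hu, ne_eq, eq_iff_iff, true_iff] at hj
        have := j.isLt
        simp only [Finset.mem_Icc]
        omega
      have hsub : ↑(insert v A) ⊆ (bipG c M).neighborSet u := by
        intro a ha
        simp only [Finset.coe_insert, Set.mem_insert_iff] at ha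
        rcases ha with rfl | ha
        · exact hadj
        · exact hA ha
      have := card_le_of_nbhd_sub hT hsub
      rw [Finset.card_insert_of_notMem hvA, hcA, Nat.card_Icc] at this
      omega
    · have hv : v.val < c := by
        rw [bipG_adj] at hadj
        by_contra hvc
        simp [hu, hvc] at hadj
      have hT : ∀ j, (bipG c M).Adj v j → j.val ∈ Finset.Icc c (M - 1) := by
        intro j hj
        rw [bipG_adj] at hj
        simp only [hv, ne_eq, eq_iff_iff, true_iff] at hj
        have := j.isLt
        simp only [Finset.mem_Icc]
        omega
      have hsub : ↑(insert u B) ⊆ (bipG c M).neighborSet v := by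
        intro a ha
        simp only [Finset.coe_insert, Set.mem_insert_iff] at ha
        rcases ha with rfl | ha
        · exact hadj.symm
        · exact hB ha
      have := card_le_of_nbhd_sub hT hsub
      rw [Finset.card_insert_of_notMem huB, hcB, Nat.card_Icc] at this
      omega
  · rintro ⟨u, v, A, B, hadj, hA, hB, hvA, huB, hAB, hcA, hcB⟩
    rw [compl_adj, bipG_adj] at hadj
    obtain ⟨huv, hside⟩ := hadj
    simp only [ne_eq, not_not, eq_iff_iff] at hside
    -- everything lives in the side of u
    have hsame : ∀ x : Fin M, x ∈ insert u (insert v (A ∪ B)) → ((x.val < c) ↔ (u.val < c)) := by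
      intro x hx
      simp only [Finset.mem_insert, Finset.mem_union] at hx
      rcases hx with rfl | rfl | hx | hx
      · rfl
      · exact hside.symm
      · have := hA (Finset.mem_coe.mpr hx)
        rw [SimpleGraph.mem_neighborSet, compl_adj, bipG_adj] at this
        simp only [ne_eq, not_not, eq_iff_iff] at this
        exact this.2.symm
      · have := hB (Finset.mem_coe.mpr hx)
        rw [SimpleGraph.mem_neighborSet, compl_adj, bipG_adj] at this
        simp only [ne_eq, not_not, eq_iff_iff] at this
        exact this.2.symm.trans hside.symm
    have hunotA : u ∉ A := by
      intro hmem
      have := hA (Finset.mem_coe.mpr hmem)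
      rw [SimpleGraph.mem_neighborSet] at this
      exact (bipG c M)ᶜ.loopless.irrefl _ this
    have hvnotB : v ∉ B := by
      intro hmem
      have := hB (Finset.mem_coe.mpr hmem)
      rw [SimpleGraph.mem_neighborSet] at this
      exact (bipG c M)ᶜ.loopless.irrefl _ this
    have hcardbig : (insert u (insert v (A ∪ B))).card = n + m + 2 := by
      rw [Finset.card_insert_of_notMem, Finset.card_insert_of_notMem,
        Finset.card_union_of_disjoint hAB, hcA, hcB]
      · simp only [Finset.mem_union]
        push_neg
        exact ⟨hvA, hvnotB⟩
      · simp only [Finset.mem_insert, Finset.mem_union]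
        push_neg
        exact ⟨huv, hunotA, huB⟩
    by_cases hu : u.val < c
    · -- all in left side: card ≤ c = n+m+1 < n+m+2
      have hle : (insert u (insert v (A ∪ B))).card ≤ c := by
        have : (insert u (insert v (A ∪ B))).card ≤ (Finset.range c).card := by
          apply Finset.card_le_card_of_injOn Fin.val
          · intro x hx
            rw [Finset.mem_coe, Finset.mem_range]
            exact (hsame x hx).mpr hu
          · intro a _ b _ h; exact Fin.val_injective h
        simpa using this
      omega
    · have hle : (insert u (insert v (A ∪ B))).card ≤ M - c := by
        have : (insert u (insert v (A ∪ B))).card ≤ (Finset.Icc c (M - 1)).card := by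
          apply Finset.card_le_card_of_injOn Fin.val
          · intro x hx
            have h1 := (hsame x hx)
            have := x.isLt
            simp only [Finset.mem_coe, Finset.mem_Icc]
            omega
          · intro a _ b _ h; exact Fin.val_injective h
        rw [Nat.card_Icc] at this
        omega
      omega

end Bip

/-! ### Construction 2: circulant graph for even `n`, on `2n+1` vertices -/

section Even

private def evenG (n h : ℕ) : SimpleGraph (Fin (2*n+1)) where
  Adj i j := i.val ≠ j.val ∧
    ((i.val ≤ j.val + h ∧ j.val ≤ i.val + h) ∨
      (j.val + (2*n+1) ≤ i.val + h) ∨ (i.val + (2*n+1) ≤ j.val + h))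
  symm := by
    constructor
    rintro i j ⟨hne, hc⟩
    exact ⟨hne.symm, by omega⟩
  loopless := by constructor; rintro i ⟨hne, -⟩; exact hne rfl

private lemma evenG_adj {n h : ℕ} {i j : Fin (2*n+1)} :
    (evenG n h).Adj i j ↔ (i.val ≠ j.val ∧
    ((i.val ≤ j.val + h ∧ j.val ≤ i.val + h) ∨
      (j.val + (2*n+1) ≤ i.val + h) ∨ (i.val + (2*n+1) ≤ j.val + h))) := Iff.rfl

private lemma evenG_boundG (n h : ℕ) (hn : n = 2*h) (hh : 1 ≤ h) (u : Fin (2*n+1)) :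
    ∃ T : Finset ℕ, T.card ≤ n ∧ ∀ j, (evenG n h).Adj u j → j.val ∈ T := by
  have hu := u.isLt
  rcases Nat.lt_or_ge u.val h with h1 | h1
  · refine ⟨(Finset.Icc 0 (u.val + h)).erase u.val ∪
      Finset.Icc (u.val + (2*n+1) - h) (2*n), ?_, ?_⟩
    · refine (Finset.card_union_le _ _).trans ?_
      have e1 : ((Finset.Icc 0 (u.val + h)).erase u.val).card = u.val + h + 1 - 0 - 1 := by
        rw [Finset.card_erase_of_mem (by simp), Nat.card_Icc]
      rw [e1, Nat.card_Icc]
      omega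
    · intro j hj
      rw [evenG_adj] at hj
      have := j.isLt
      simp only [Finset.mem_union, Finset.mem_erase, Finset.mem_Icc]
      omega
  · rcases le_or_gt (u.val + h) (2*n) with h2 | h2
    · refine ⟨(Finset.Icc (u.val - h) (u.val + h)).erase u.val, ?_, ?_⟩
      · have e1 : ((Finset.Icc (u.val - h) (u.val + h)).erase u.val).card
            = u.val + h + 1 - (u.val - h) - 1 := by
          rw [Finset.card_erase_of_mem (by simp only [Finset.mem_Icc]; omega), Nat.card_Icc]
        rw [e1]; omega
      · intro j hj
        rw [evenG_adj] at hj
        have := j.isLt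
        simp only [Finset.mem_erase, Finset.mem_Icc]
        omega
    · refine ⟨(Finset.Icc (u.val - h) (2*n)).erase u.val ∪
        Finset.Icc 0 (u.val + h - (2*n+1)), ?_, ?_⟩
      · refine (Finset.card_union_le _ _).trans ?_
        have e1 : ((Finset.Icc (u.val - h) (2*n)).erase u.val).card
            = 2*n + 1 - (u.val - h) - 1 := by
          rw [Finset.card_erase_of_mem (by simp only [Finset.mem_Icc]; omega), Nat.card_Icc]
        rw [e1, Nat.card_Icc]
        omega
      · intro j hj
        rw [evenG_adj] at hj
        have := j.isLt
        simp only [Finset.mem_union, Finset.mem_erase, Finset.mem_Icc]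
        omega

private lemma evenG_boundGc (n h : ℕ) (hn : n = 2*h) (hh : 1 ≤ h) (u : Fin (2*n+1)) :
    ∃ T : Finset ℕ, T.card ≤ n ∧ ∀ j, (evenG n h)ᶜ.Adj u j → j.val ∈ T := by
  have hu := u.isLt
  rcases le_or_gt u.val h with h1 | h1
  · refine ⟨Finset.Icc (u.val + h + 1) (u.val + (2*n+1) - h - 1), ?_, ?_⟩
    · rw [Nat.card_Icc]; omega
    · intro j hj
      rw [compl_adj, evenG_adj] at hj
      obtain ⟨hne, hnot⟩ := hj
      have hne' : u.val ≠ j.val := fun he => hne (Fin.ext he)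
      have := j.isLt
      simp only [Finset.mem_Icc]
      omega
  · rcases le_or_gt u.val (3*h) with h2 | h2
    · refine ⟨Finset.Icc (u.val + h + 1) (2*n) ∪ Finset.Icc 0 (u.val - h - 1), ?_, ?_⟩
      · refine (Finset.card_union_le _ _).trans ?_
        rw [Nat.card_Icc, Nat.card_Icc]
        omega
      · intro j hj
        rw [compl_adj, evenG_adj] at hj
        obtain ⟨hne, hnot⟩ := hj
        have hne' : u.val ≠ j.val := fun he => hne (Fin.ext he)
        have := j.isLt
        simp only [Finset.mem_union, Finset.mem_Icc]
        omega
    · refine ⟨Finset.Icc (u.val - 2*h) (u.val - h - 1) ∪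
        Finset.Icc (u.val + h + 1 - (2*n+1)) (u.val + 2*h - (2*n+1)), ?_, ?_⟩
      · refine (Finset.card_union_le _ _).trans ?_
        rw [Nat.card_Icc, Nat.card_Icc]
        omega
      · intro j hj
        rw [compl_adj, evenG_adj] at hj
        obtain ⟨hne, hnot⟩ := hj
        have hne' : u.val ≠ j.val := fun he => hne (Fin.ext he)
        have := j.isLt
        simp only [Finset.mem_union, Finset.mem_Icc]
        omega

private lemma evenG_no (n h m : ℕ) (hn : n = 2*h) (hh : 1 ≤ h) :
    ¬ HasDoubleStar (evenG n h) n m ∧ ¬ HasDoubleStar (evenG n h)ᶜ n m :=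
  ⟨noDS_of_bound (fun u => evenG_boundG n h hn hh u),
   noDS_of_bound (fun u => evenG_boundGc n h hn hh u)⟩

end Even

/-! ### Construction 3: special graph for odd `n ≥ 7`, on `2n+1` vertices -/

section Odd

/-- Non-edges inside the core `{0,…,n+1}` (perfect matching + cycle on `{1,…,n-1}`). -/
private def Fp (n h a b : ℕ) : Prop :=
  (b = a + h ∧ 1 ≤ a) ∨ (a = b + h ∧ 1 ≤ b) ∨
  (b = a + 1 ∧ 1 ≤ a ∧ a ≤ n - 2) ∨ (a = b + 1 ∧ 1 ≤ b ∧ b ≤ n - 2) ∨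
  (a = 1 ∧ b = n - 1) ∨ (b = 1 ∧ a = n - 1)

/-- Cross edges between the core vertex `a ∈ {1,…,n-1}` and `Y`-vertex `b ∈ {n+2,…,2n}`. -/
private def Bp (n a b : ℕ) : Prop :=
  (n + 2 ≤ b ∧ b ≤ 2*n) ∧
  ((b = a + (n+1) ∧ 1 ≤ a) ∨ (b = a + n ∧ 2 ≤ a ∧ a ≤ n - 1) ∨ (a = 1 ∧ b = 2*n))

private def Qd (n h a b : ℕ) : Prop :=
  (a ≤ n+1 ∧ b ≤ n+1 ∧ ¬ Fp n h a b) ∨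
  (n + 2 ≤ a ∧ a ≤ 2*n ∧ n + 2 ≤ b ∧ b ≤ 2*n) ∨
  Bp n a b ∨ Bp n b a

private lemma Fp_symm {n h a b : ℕ} (hf : Fp n h a b) : Fp n h b a := by
  simp only [Fp] at hf ⊢; omega

private lemma Qd_symm {n h a b : ℕ} (hq : Qd n h a b) : Qd n h b a := by
  simp only [Qd] at hq ⊢
  rcases hq with ⟨ha, hb, hnf⟩ | ⟨h1,h2,h3,h4⟩ | hb | hb
  · exact Or.inl ⟨hb, ha, fun hf => hnf (Fp_symm hf)⟩
  · exact Or.inr (Or.inl ⟨h3,h4,h1,h2⟩)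
  · exact Or.inr (Or.inr (Or.inr hb))
  · exact Or.inr (Or.inr (Or.inl hb))

private lemma Qd_zero {n h b : ℕ} (hn7 : 7 ≤ n) (hq : Qd n h 0 b) : b ≤ n+1 := by
  simp only [Qd] at hq
  rcases hq with ⟨_, hb, _⟩ | hY | hB | hB
  · exact hb
  · omega
  · simp only [Bp] at hB; omega
  · simp only [Bp] at hB; omega

private lemma Qd_cross {n h v b : ℕ} (hv : v ≤ n+1) (hb : n+2 ≤ b) (hq : Qd n h v b) :
    Bp n v b := by
  simp only [Qd] at hq
  rcases hq with ⟨_, hble, _⟩ | hY | hB | hB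
  · omega
  · omega
  · exact hB
  · simp only [Bp] at hB ⊢; omega

private def oddG (n h : ℕ) : SimpleGraph (Fin (2*n+1)) where
  Adj i j := i.val ≠ j.val ∧ Qd n h i.val j.val
  symm := by
    constructor
    rintro i j ⟨hne, hq⟩
    exact ⟨hne.symm, Qd_symm hq⟩
  loopless := by constructor; rintro i ⟨hne, -⟩; exact hne rfl

private lemma oddG_adj {n h : ℕ} {i j : Fin (2*n+1)} :
    (oddG n h).Adj i j ↔ (i.val ≠ j.val ∧ Qd n h i.val j.val) := Iff.rfl

/-- Zone `1 ≤ u ≤ n-1`, bound in `G`. -/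
private lemma auxaG (n h : ℕ) (hn : n = 2*h - 1) (hh : 4 ≤ h) (u : Fin (2*n+1))
    (p₁ p₂ p₃ q₁ q₂ : ℕ)
    (hu : 1 ≤ u.val ∧ u.val ≤ n - 1)
    (hp : p₁ ≤ n+1 ∧ p₂ ≤ n+1 ∧ p₃ ≤ n+1 ∧ p₁ ≠ u.val ∧ p₂ ≠ u.val ∧ p₃ ≠ u.val ∧
      p₁ ≠ p₂ ∧ p₁ ≠ p₃ ∧ p₂ ≠ p₃)
    (hF : ∀ b, b ≤ n+1 → (Fp n h u.val b ↔ (b = p₁ ∨ b = p₂ ∨ b = p₃)))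
    (hBq : ∀ b, Bp n u.val b → (b = q₁ ∨ b = q₂)) :
    ∃ T : Finset ℕ, T.card ≤ n ∧ ∀ j, (oddG n h).Adj u j → j.val ∈ T := by
  refine ⟨(Finset.Icc 0 (n+1) \ {u.val, p₁, p₂, p₃}) ∪ {q₁, q₂}, ?_, ?_⟩
  · refine (Finset.card_union_le _ _).trans ?_
    have hsub : ({u.val, p₁, p₂, p₃} : Finset ℕ) ⊆ Finset.Icc 0 (n+1) := by
      intro x hx
      simp only [Finset.mem_insert, Finset.mem_singleton] at hx
      simp only [Finset.mem_Icc]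
      omega
    have h4 : ({u.val, p₁, p₂, p₃} : Finset ℕ).card = 4 := by
      rw [Finset.card_insert_of_notMem
          (by simp only [Finset.mem_insert, Finset.mem_singleton]; omega),
        Finset.card_insert_of_notMem
          (by simp only [Finset.mem_insert, Finset.mem_singleton]; omega),
        Finset.card_insert_of_notMem (by simp only [Finset.mem_singleton]; omega),
        Finset.card_singleton]
    have h2 : ({q₁, q₂} : Finset ℕ).card ≤ 2 := (Finset.card_insert_le _ _).trans (by simp)
    rw [Finset.card_sdiff_of_subset hsub, h4, Nat.card_Icc]
    omega
  · intro j hj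
    rw [oddG_adj] at hj
    obtain ⟨hne, hq⟩ := hj
    have hjlt := j.isLt
    simp only [Finset.mem_union, Finset.mem_sdiff, Finset.mem_Icc, Finset.mem_insert,
      Finset.mem_singleton]
    simp only [Qd] at hq
    rcases hq with ⟨hu1, hj1, hnF⟩ | hY | hBuj | hBju
    · have : ¬(j.val = p₁ ∨ j.val = p₂ ∨ j.val = p₃) := fun hc => hnF ((hF j.val hj1).mpr hc)
      omega
    · omega
    · have := hBq j.val hBuj
      omega
    · simp only [Bp] at hBju
      omega

/-- Zone `1 ≤ u ≤ n-1`, bound in `Gᶜ`. -/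
private lemma auxaGc (n h : ℕ) (hn : n = 2*h - 1) (hh : 4 ≤ h) (u : Fin (2*n+1))
    (p₁ p₂ p₃ q₁ q₂ : ℕ)
    (hu : 1 ≤ u.val ∧ u.val ≤ n - 1)
    (hq12 : q₁ ≠ q₂ ∧ n+2 ≤ q₁ ∧ q₁ ≤ 2*n ∧ n+2 ≤ q₂ ∧ q₂ ≤ 2*n)
    (hF : ∀ b, b ≤ n+1 → (Fp n h u.val b ↔ (b = p₁ ∨ b = p₂ ∨ b = p₃)))
    (hBq' : ∀ b, (b = q₁ ∨ b = q₂) → Bp n u.val b) :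
    ∃ T : Finset ℕ, T.card ≤ n ∧ ∀ j, (oddG n h)ᶜ.Adj u j → j.val ∈ T := by
  refine ⟨({p₁, p₂, p₃} : Finset ℕ) ∪ (Finset.Icc (n+2) (2*n) \ {q₁, q₂}), ?_, ?_⟩
  · refine (Finset.card_union_le _ _).trans ?_
    have h3 : ({p₁, p₂, p₃} : Finset ℕ).card ≤ 3 := by
      refine (Finset.card_insert_le _ _).trans ?_
      have := Finset.card_insert_le p₂ ({p₃} : Finset ℕ)
      simp only [Finset.card_singleton] at this ⊢
      omega
    have hsub : ({q₁, q₂} : Finset ℕ) ⊆ Finset.Icc (n+2) (2*n) := by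
      intro x hx
      simp only [Finset.mem_insert, Finset.mem_singleton] at hx
      simp only [Finset.mem_Icc]
      omega
    have h2 : ({q₁, q₂} : Finset ℕ).card = 2 := by
      rw [Finset.card_insert_of_notMem (by simp only [Finset.mem_singleton]; omega),
        Finset.card_singleton]
    rw [Finset.card_sdiff_of_subset hsub, h2, Nat.card_Icc]
    omega
  · intro j hj
    rw [compl_adj] at hj
    obtain ⟨hne, hna⟩ := hj
    have hne' : u.val ≠ j.val := fun he => hne (Fin.ext he)
    have hnq : ¬ Qd n h u.val j.val := fun hqq => hna (oddG_adj.mpr ⟨hne', hqq⟩)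
    have hjlt := j.isLt
    simp only [Finset.mem_union, Finset.mem_sdiff, Finset.mem_Icc, Finset.mem_insert,
      Finset.mem_singleton]
    rcases le_or_gt j.val (n+1) with hle | hgt
    · have hFp : Fp n h u.val j.val := by
        by_contra hc
        exact hnq (Or.inl ⟨by omega, hle, hc⟩)
      have := (hF j.val hle).mp hFp
      omega
    · have hq1 : j.val ≠ q₁ := fun he => hnq (Or.inr (Or.inr (Or.inl (hBq' j.val (Or.inl he)))))
      have hq2 : j.val ≠ q₂ := fun he => hnq (Or.inr (Or.inr (Or.inl (hBq' j.val (Or.inr he)))))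
      omega

/-- Zone `u ∈ {n, n+1}`: single non-neighbour `u - h` in the core, no cross edges. -/
private lemma auxbG (n h : ℕ) (hn : n = 2*h - 1) (hh : 4 ≤ h) (u : Fin (2*n+1))
    (hu : n ≤ u.val ∧ u.val ≤ n + 1) :
    ∃ T : Finset ℕ, T.card ≤ n ∧ ∀ j, (oddG n h).Adj u j → j.val ∈ T := by
  have hF : ∀ b, b ≤ n+1 → (Fp n h u.val b ↔ b = u.val - h) := by
    intro b hb
    simp only [Fp]
    omega
  have hBn : ∀ b, ¬ Bp n u.val b := by
    intro b
    simp only [Bp]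
    omega
  refine ⟨Finset.Icc 0 (n+1) \ {u.val, u.val - h}, ?_, ?_⟩
  · have hsub : ({u.val, u.val - h} : Finset ℕ) ⊆ Finset.Icc 0 (n+1) := by
      intro x hx
      simp only [Finset.mem_insert, Finset.mem_singleton] at hx
      simp only [Finset.mem_Icc]
      omega
    have h2 : ({u.val, u.val - h} : Finset ℕ).card = 2 := by
      rw [Finset.card_insert_of_notMem (by simp only [Finset.mem_singleton]; omega),
        Finset.card_singleton]
    rw [Finset.card_sdiff_of_subset hsub, h2, Nat.card_Icc]
    omega
  · intro j hj
    rw [oddG_adj] at hj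
    obtain ⟨hne, hq⟩ := hj
    have hjlt := j.isLt
    simp only [Finset.mem_sdiff, Finset.mem_Icc, Finset.mem_insert, Finset.mem_singleton]
    simp only [Qd] at hq
    rcases hq with ⟨hu1, hj1, hnF⟩ | hY | hBuj | hBju
    · have : ¬ j.val = u.val - h := fun hc => hnF ((hF j.val hj1).mpr hc)
      omega
    · omega
    · exact absurd hBuj (hBn _)
    · simp only [Bp] at hBju
      omega

private lemma auxbGc (n h : ℕ) (hn : n = 2*h - 1) (hh : 4 ≤ h) (u : Fin (2*n+1))
    (hu : n ≤ u.val ∧ u.val ≤ n + 1) :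
    ∃ T : Finset ℕ, T.card ≤ n ∧ ∀ j, (oddG n h)ᶜ.Adj u j → j.val ∈ T := by
  have hF : ∀ b, b ≤ n+1 → (Fp n h u.val b ↔ b = u.val - h) := by
    intro b hb
    simp only [Fp]
    omega
  refine ⟨({u.val - h} : Finset ℕ) ∪ Finset.Icc (n+2) (2*n), ?_, ?_⟩
  · refine (Finset.card_union_le _ _).trans ?_
    rw [Finset.card_singleton, Nat.card_Icc]
    omega
  · intro j hj
    rw [compl_adj] at hj
    obtain ⟨hne, hna⟩ := hj
    have hne' : u.val ≠ j.val := fun he => hne (Fin.ext he)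
    have hnq : ¬ Qd n h u.val j.val := fun hqq => hna (oddG_adj.mpr ⟨hne', hqq⟩)
    have hjlt := j.isLt
    simp only [Finset.mem_union, Finset.mem_Icc, Finset.mem_singleton]
    rcases le_or_gt j.val (n+1) with hle | hgt
    · have hFp : Fp n h u.val j.val := by
        by_contra hc
        exact hnq (Or.inl ⟨by omega, hle, hc⟩)
      have := (hF j.val hle).mp hFp
      omega
    · omega

/-- Zone `u ∈ {n+2,…,2n}` (the set `Y`). -/
private lemma auxcG (n h : ℕ) (hn : n = 2*h - 1) (hh : 4 ≤ h) (u : Fin (2*n+1))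
    (ξ₁ ξ₂ : ℕ) (hu : n + 2 ≤ u.val ∧ u.val ≤ 2*n)
    (hxi : ξ₁ ≠ ξ₂ ∧ ξ₁ ≤ n+1 ∧ ξ₂ ≤ n+1)
    (hBy : ∀ a, Bp n a u.val ↔ (a = ξ₁ ∨ a = ξ₂)) :
    ∃ T : Finset ℕ, T.card ≤ n ∧ ∀ j, (oddG n h).Adj u j → j.val ∈ T := by
  refine ⟨(Finset.Icc (n+2) (2*n) \ {u.val}) ∪ {ξ₁, ξ₂}, ?_, ?_⟩
  · refine (Finset.card_union_le _ _).trans ?_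
    have hsub : ({u.val} : Finset ℕ) ⊆ Finset.Icc (n+2) (2*n) := by
      intro x hx
      simp only [Finset.mem_singleton] at hx
      simp only [Finset.mem_Icc]
      omega
    have h2 : ({ξ₁, ξ₂} : Finset ℕ).card ≤ 2 := (Finset.card_insert_le _ _).trans (by simp)
    rw [Finset.card_sdiff_of_subset hsub, Finset.card_singleton, Nat.card_Icc]
    omega
  · intro j hj
    rw [oddG_adj] at hj
    obtain ⟨hne, hq⟩ := hj
    have hjlt := j.isLt
    simp only [Finset.mem_union, Finset.mem_sdiff, Finset.mem_Icc, Finset.mem_insert,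
      Finset.mem_singleton]
    simp only [Qd] at hq
    rcases hq with ⟨hu1, hj1, hnF⟩ | hY | hBuj | hBju
    · omega
    · omega
    · simp only [Bp] at hBuj
      omega
    · have := (hBy j.val).mp hBju
      omega

private lemma auxcGc (n h : ℕ) (hn : n = 2*h - 1) (hh : 4 ≤ h) (u : Fin (2*n+1))
    (ξ₁ ξ₂ : ℕ) (hu : n + 2 ≤ u.val ∧ u.val ≤ 2*n)
    (hxi : ξ₁ ≠ ξ₂ ∧ ξ₁ ≤ n+1 ∧ ξ₂ ≤ n+1)
    (hBy : ∀ a, Bp n a u.val ↔ (a = ξ₁ ∨ a = ξ₂)) :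
    ∃ T : Finset ℕ, T.card ≤ n ∧ ∀ j, (oddG n h)ᶜ.Adj u j → j.val ∈ T := by
  refine ⟨Finset.Icc 0 (n+1) \ {ξ₁, ξ₂}, ?_, ?_⟩
  · have hsub : ({ξ₁, ξ₂} : Finset ℕ) ⊆ Finset.Icc 0 (n+1) := by
      intro x hx
      simp only [Finset.mem_insert, Finset.mem_singleton] at hx
      simp only [Finset.mem_Icc]
      omega
    have h2 : ({ξ₁, ξ₂} : Finset ℕ).card = 2 := by
      rw [Finset.card_insert_of_notMem (by simp only [Finset.mem_singleton]; omega),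
        Finset.card_singleton]
    rw [Finset.card_sdiff_of_subset hsub, h2, Nat.card_Icc]
    omega
  · intro j hj
    rw [compl_adj] at hj
    obtain ⟨hne, hna⟩ := hj
    have hne' : u.val ≠ j.val := fun he => hne (Fin.ext he)
    have hnq : ¬ Qd n h u.val j.val := fun hqq => hna (oddG_adj.mpr ⟨hne', hqq⟩)
    have hjlt := j.isLt
    simp only [Finset.mem_sdiff, Finset.mem_Icc, Finset.mem_insert, Finset.mem_singleton]
    rcases le_or_gt j.val (n+1) with hle | hgt
    · have hx1 : j.val ≠ ξ₁ := fun he => hnq (Or.inr (Or.inr (Or.inr ((hBy j.val).mpr (Or.inl he)))))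
      have hx2 : j.val ≠ ξ₂ := fun he => hnq (Or.inr (Or.inr (Or.inr ((hBy j.val).mpr (Or.inr he)))))
      omega
    · exact absurd (Or.inr (Or.inl ⟨by omega, by omega, by omega, by omega⟩)) hnq

private lemma oddG_boundG (n h : ℕ) (hn : n = 2*h - 1) (hh : 4 ≤ h) (u : Fin (2*n+1))
    (hu0 : u.val ≠ 0) :
    ∃ T : Finset ℕ, T.card ≤ n ∧ ∀ j, (oddG n h).Adj u j → j.val ∈ T := by
  have hult := u.isLt
  rcases le_or_gt u.val (n-1) with hz | hz
  · by_cases he1 : u.val = 1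
    · exact auxaG n h hn hh u (1+h) 2 (n-1) (n+2) (2*n) (by omega) (by omega)
        (fun b hb => by simp only [Fp]; omega)
        (fun b hb => by simp only [Bp] at hb; omega)
    · by_cases hen : u.val = n - 1
      · exact auxaG n h hn hh u (h-2) (n-2) 1 (u.val+n) (u.val+n+1) (by omega) (by omega)
          (fun b hb => by simp only [Fp]; omega)
          (fun b hb => by simp only [Bp] at hb; omega)
      · rcases le_or_gt u.val h with hmid | hmid
        · exact auxaG n h hn hh u (u.val+h) (u.val-1) (u.val+1) (u.val+n) (u.val+n+1)
            (by omega) (by omega)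
            (fun b hb => by simp only [Fp]; omega)
            (fun b hb => by simp only [Bp] at hb; omega)
        · exact auxaG n h hn hh u (u.val-h) (u.val-1) (u.val+1) (u.val+n) (u.val+n+1)
            (by omega) (by omega)
            (fun b hb => by simp only [Fp]; omega)
            (fun b hb => by simp only [Bp] at hb; omega)
  · rcases le_or_gt u.val (n+1) with hz2 | hz2
    · exact auxbG n h hn hh u (by omega)
    · by_cases he : u.val = 2*n
      · exact auxcG n h hn hh u (n-1) 1 (by omega) (by omega)
          (fun a => by simp only [Bp]; omega)
      · exact auxcG n h hn hh u (u.val-(n+1)) (u.val-n) (by omega) (by omega)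
          (fun a => by simp only [Bp]; omega)

private lemma oddG_boundGc (n h : ℕ) (hn : n = 2*h - 1) (hh : 4 ≤ h) (u : Fin (2*n+1)) :
    ∃ T : Finset ℕ, T.card ≤ n ∧ ∀ j, (oddG n h)ᶜ.Adj u j → j.val ∈ T := by
  have hult := u.isLt
  by_cases hu0 : u.val = 0
  · refine ⟨Finset.Icc (n+2) (2*n), ?_, ?_⟩
    · rw [Nat.card_Icc]; omega
    · intro j hj
      rw [compl_adj] at hj
      obtain ⟨hne, hna⟩ := hj
      have hne' : u.val ≠ j.val := fun he => hne (Fin.ext he)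
      have hnq : ¬ Qd n h u.val j.val := fun hqq => hna (oddG_adj.mpr ⟨hne', hqq⟩)
      have hjlt := j.isLt
      simp only [Finset.mem_Icc]
      rcases le_or_gt j.val (n+1) with hle | hgt
      · exfalso
        apply hnq
        refine Or.inl ⟨by omega, hle, ?_⟩
        simp only [Fp]
        omega
      · omega
  · rcases le_or_gt u.val (n-1) with hz | hz
    · by_cases he1 : u.val = 1
      · exact auxaGc n h hn hh u (1+h) 2 (n-1) (n+2) (2*n) (by omega) (by omega)
          (fun b hb => by simp only [Fp]; omega)
          (fun b hb => by simp only [Bp]; omega)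
      · by_cases hen : u.val = n - 1
        · exact auxaGc n h hn hh u (h-2) (n-2) 1 (u.val+n) (u.val+n+1) (by omega) (by omega)
            (fun b hb => by simp only [Fp]; omega)
            (fun b hb => by simp only [Bp]; omega)
        · rcases le_or_gt u.val h with hmid | hmid
          · exact auxaGc n h hn hh u (u.val+h) (u.val-1) (u.val+1) (u.val+n) (u.val+n+1)
              (by omega) (by omega)
              (fun b hb => by simp only [Fp]; omega)
              (fun b hb => by simp only [Bp]; omega)
          · exact auxaGc n h hn hh u (u.val-h) (u.val-1) (u.val+1) (u.val+n) (u.val+n+1)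
              (by omega) (by omega)
              (fun b hb => by simp only [Fp]; omega)
              (fun b hb => by simp only [Bp]; omega)
    · rcases le_or_gt u.val (n+1) with hz2 | hz2
      · exact auxbGc n h hn hh u (by omega)
      · by_cases he : u.val = 2*n
        · exact auxcGc n h hn hh u (n-1) 1 (by omega) (by omega)
            (fun a => by simp only [Bp]; omega)
        · exact auxcGc n h hn hh u (u.val-(n+1)) (u.val-n) (by omega) (by omega)
            (fun a => by simp only [Bp]; omega)

private lemma oddG_noG (n h m : ℕ) (hn : n = 2*h - 1) (hh : 4 ≤ h) (hm : 3 ≤ m) :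
    ¬ HasDoubleStar (oddG n h) n m := by
  classical
  rintro ⟨u, v, A, B, hadj, hA, hB, hvA, huB, hAB, hcA, hcB⟩
  by_cases hu0 : u.val = 0
  case neg =>
    obtain ⟨T, hTc, hT⟩ := oddG_boundG n h hn hh u hu0
    have hsub : ↑(insert v A) ⊆ (oddG n h).neighborSet u := by
      intro a ha
      simp only [Finset.coe_insert, Set.mem_insert_iff] at ha
      rcases ha with rfl | ha
      · exact hadj
      · exact hA ha
    have := card_le_of_nbhd_sub hT hsub
    rw [Finset.card_insert_of_notMem hvA, hcA] at this
    omega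
  case pos =>
    rw [oddG_adj] at hadj
    obtain ⟨hne, hq⟩ := hadj
    have hvlt := v.isLt
    have hv1 : 1 ≤ v.val ∧ v.val ≤ n + 1 := by
      rw [hu0] at hne hq
      exact ⟨by omega, Qd_zero (by omega) hq⟩
    set S : Finset (Fin (2*n+1)) :=
      (Finset.univ.filter (fun j : Fin (2*n+1) => 1 ≤ j.val ∧ j.val ≤ n+1)).erase v with hS
    have hvS : v ∈ Finset.univ.filter (fun j : Fin (2*n+1) => 1 ≤ j.val ∧ j.val ≤ n+1) := by
      simp only [Finset.mem_filter, Finset.mem_univ, true_and]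
      exact hv1
    have hScard : S.card = n := by
      have hfil : (Finset.univ.filter (fun j : Fin (2*n+1) => 1 ≤ j.val ∧ j.val ≤ n+1)).card
          = ((Finset.range (2*n+1)).filter (fun b => 1 ≤ b ∧ b ≤ n+1)).card :=
        card_filter_val (fun b => 1 ≤ b ∧ b ≤ n+1)
      have hsimp : (Finset.range (2*n+1)).filter (fun b => 1 ≤ b ∧ b ≤ n+1)
          = Finset.Icc 1 (n+1) := by
        ext b
        simp only [Finset.mem_filter, Finset.mem_range, Finset.mem_Icc]
        omega
      rw [hS, Finset.card_erase_of_mem hvS, hfil, hsimp, Nat.card_Icc]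
      omega
    have hAsubS : A ⊆ S := by
      intro a haA
      have hadj0 := hA (Finset.mem_coe.mpr haA)
      rw [SimpleGraph.mem_neighborSet, oddG_adj] at hadj0
      obtain ⟨hne0, hq0⟩ := hadj0
      have ha1 : 1 ≤ a.val ∧ a.val ≤ n+1 := by
        rw [hu0] at hne0 hq0
        exact ⟨by omega, Qd_zero (by omega) hq0⟩
      have hav : a ≠ v := fun heq => hvA (heq ▸ haA)
      rw [hS, Finset.mem_erase, Finset.mem_filter]
      exact ⟨hav, Finset.mem_univ _, ha1⟩
    have hAeq : A = S := Finset.eq_of_subset_of_card_le hAsubS (by rw [hScard, hcA])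
    have hBfact : ∀ b ∈ B, n + 2 ≤ b.val ∧ Bp n v.val b.val := by
      intro b hb
      have hadjb := hB (Finset.mem_coe.mpr hb)
      rw [SimpleGraph.mem_neighborSet, oddG_adj] at hadjb
      obtain ⟨hvb, hqb⟩ := hadjb
      have hbge : n + 2 ≤ b.val := by
        have hbu : b ≠ u := fun heq => huB (heq ▸ hb)
        have hb0 : b.val ≠ 0 := fun heq => hbu (Fin.ext (by rw [heq, hu0]))
        have hbA : b ∉ A := Finset.disjoint_right.mp hAB hb
        by_contra hc
        push_neg at hc
        apply hbA
        rw [hAeq, hS, Finset.mem_erase, Finset.mem_filter]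
        refine ⟨fun heq => hvb (by rw [heq]), Finset.mem_univ _, by omega, by omega⟩
      exact ⟨hbge, Qd_cross hv1.2 hbge hqb⟩
    -- now bound the size of B
    rcases le_or_gt v.val (n-1) with hvz | hvz
    · -- v has exactly two Y-neighbours
      have hq12 : ∃ q₁ q₂ : ℕ, ∀ b ∈ B, b.val = q₁ ∨ b.val = q₂ := by
        by_cases hv1' : v.val = 1
        · refine ⟨n+2, 2*n, fun b hb => ?_⟩
          obtain ⟨hbge, hqb⟩ := hBfact b hb
          have := b.isLt
          simp only [Bp] at hqb
          omega
        · refine ⟨v.val + n, v.val + n + 1, fun b hb => ?_⟩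
          obtain ⟨hbge, hqb⟩ := hBfact b hb
          have := b.isLt
          simp only [Bp] at hqb
          omega
      obtain ⟨q₁, q₂, hq12⟩ := hq12
      have hB2 : B.card ≤ 2 := by
        have : B.card ≤ ({q₁, q₂} : Finset ℕ).card := by
          apply Finset.card_le_card_of_injOn Fin.val
          · intro b hb
            simp only [Finset.mem_coe, Finset.mem_insert, Finset.mem_singleton]
            exact hq12 b hb
          · intro a _ b _ hab; exact Fin.val_injective hab
        have h2 : ({q₁, q₂} : Finset ℕ).card ≤ 2 := (Finset.card_insert_le _ _).trans (by simp)
        omega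
      omega
    · -- v ∈ {n, n+1} has no Y-neighbours
      have : B = ∅ := by
        apply Finset.eq_empty_of_forall_notMem
        intro b hb
        obtain ⟨hbge, hqb⟩ := hBfact b hb
        have := b.isLt
        simp only [Bp] at hqb
        omega
      rw [this, Finset.card_empty] at hcB
      omega

private lemma oddG_no (n h m : ℕ) (hn : n = 2*h - 1) (hh : 4 ≤ h) (hm : 3 ≤ m) :
    ¬ HasDoubleStar (oddG n h) n m ∧ ¬ HasDoubleStar (oddG n h)ᶜ n m :=
  ⟨oddG_noG n h m hn hh hm, noDS_of_bound (fun u => oddG_boundGc n h hn hh u)⟩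

end Odd

theorem doubleStarRamsey_lower (n m : ℕ) (h3 : 3 ≤ m) (hnm : m ≤ n) :
    max (2*n + 2) (n + 2*m + 2) ≤ doubleStarRamsey n m := by
  unfold doubleStarRamsey
  refine le_csInf ⟨4*n+4*m+8, ?_⟩ ?_
  · exact ramsey_exists n m
  intro N hN
  have hN' : ∀ G : SimpleGraph (Fin N), HasDoubleStar G n m ∨ HasDoubleStar Gᶜ n m := hN
  have hb1 : n + 2*m + 2 ≤ N := by
    obtain ⟨hG1, hG2⟩ := bipG_no n m hnm (by omega)
    have := ge_of_counterexample (bipG (n+m+1) (n+2*m+1)) hG1 hG2 hN'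
    omega
  have hb2 : 2*n + 2 ≤ N := by
    rcases le_or_gt n (2*m) with hsm | hsm
    · omega
    · rcases Nat.even_or_odd n with ⟨k, hk⟩ | ⟨k, hk⟩
      · obtain ⟨hG1, hG2⟩ := evenG_no n k m (by omega) (by omega)
        have := ge_of_counterexample _ hG1 hG2 hN'
        omega
      · obtain ⟨hG1, hG2⟩ := oddG_no n (k+1) m (by omega) (by omega) h3
        have := ge_of_counterexample _ hG1 hG2 hN'
        omega
  omega
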